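/- For every even integer ℘ ≥ 4, the Toeplitz graph T_℘⟨{1, ℘−2}⟩ satisfies ℘/(℘−1) ≤ ldim_f(T_℘⟨{1, ℘−2}⟩) ≤ ℘/(℘−2). -/

import Mathlib

open Finset

/-- A local resolving function of a graph `G`: a map `ζ : V → [0,1]` such that for every
pair of adjacent vertices `u v`, the sum of `ζ` over the local resolving neighborhood
`R{u,v} = {w : d(w,u) ≠ d(w,v)}` is at least `1`. -/
def IsLocalResolvingFunction {V : Type*} [Fintype V] (G : SimpleGraph V) (ζ : V → ℝ) : Prop :=
  (∀ w, ζ w ∈ Set.Icc (0 : ℝ) 1) ∧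
    ∀ u v, G.Adj u v →
      1 ≤ ∑ w ∈ Finset.univ.filter (fun w => G.dist w u ≠ G.dist w v), ζ w

/-- The local fractional metric dimension of `G`: the minimum of `∑ v, ζ v` over all
local resolving functions `ζ` of `G`. -/
noncomputable def ldimf {V : Type*} [Fintype V] (G : SimpleGraph V) : ℝ :=
  sInf {s : ℝ | ∃ ζ : V → ℝ, IsLocalResolvingFunction G ζ ∧ s = ∑ v, ζ v}

/-- The Toeplitz graph `T_n⟨S⟩` (vertices `0, …, n-1` standing for `1, …, n`):
two distinct vertices are adjacent iff their absolute difference lies in `S`. -/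
def toeplitzGraph (n : ℕ) (S : Set ℕ) : SimpleGraph (Fin n) where
  Adj p q := p ≠ q ∧ Nat.dist (p : ℕ) (q : ℕ) ∈ S
  symm := ⟨fun p q ⟨h1, h2⟩ => ⟨h1.symm, by rwa [Nat.dist_comm]⟩⟩
  loopless := ⟨fun p ⟨h, _⟩ => h rfl⟩

set_option maxHeartbeats 4000000



def cycd (n a b : ℕ) : ℕ := min (Nat.dist a b) (n - Nat.dist a b)

def Dst (p i j : ℕ) : ℕ :=
  if i = p - 1 then (if j = p - 1 then 0 else 1 + min (cycd (p-1) 1 j) (cycd (p-1) (p-2) j))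
  else if j = p - 1 then 1 + min (cycd (p-1) i 1) (cycd (p-1) i (p-2))
  else cycd (p-1) i j

lemma cyc_step {n d e : ℕ} (hd : d ≤ n) (he : e ≤ n)
    (h : (d ≤ e + 1 ∧ e ≤ d + 1) ∨ d + e + 1 = n) :
    min d (n - d) ≤ min e (n - e) + 1 := by omega

/-- step along the cycle: if i,k are cycle-adjacent in C_n then cycd is 1-Lipschitz. -/
lemma cycd_adj_step {n : ℕ} (hn : 3 ≤ n) {i k j : ℕ} (hi : i < n) (hk : k < n) (hj : j < n)
    (hik : k = i + 1 ∨ i = k + 1 ∨ (i = 0 ∧ k = n-1) ∨ (k = 0 ∧ i = n-1)) :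
    cycd n i j ≤ cycd n k j + 1 := by
  apply cyc_step
  · simp only [Nat.dist]; omega
  · simp only [Nat.dist]; omega
  · rcases hik with h | h | ⟨h1,h2⟩ | ⟨h1,h2⟩ <;> simp only [Nat.dist] <;> omega

lemma cycd_comm (n a b : ℕ) : cycd n a b = cycd n b a := by
  simp [cycd, Nat.dist_comm]

lemma dst_self (p i : ℕ) : Dst p i i = 0 := by
  simp only [Dst, cycd, Nat.dist]; split_ifs <;> omega

lemma Dst_nn (p : ℕ) {i j : ℕ} (hi : i ≠ p-1) (hj : j ≠ p-1) :
    Dst p i j = cycd (p-1) i j := by simp [Dst, hi, hj]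

lemma Dst_nl (p : ℕ) {j : ℕ} (hj : j ≠ p-1) :
    Dst p (p-1) j = 1 + min (cycd (p-1) 1 j) (cycd (p-1) (p-2) j) := by simp [Dst, hj]

lemma Dst_nr (p : ℕ) {i : ℕ} (hi : i ≠ p-1) :
    Dst p i (p-1) = 1 + min (cycd (p-1) i 1) (cycd (p-1) i (p-2)) := by simp [Dst, hi]

lemma Dst_nn' (p : ℕ) : Dst p (p-1) (p-1) = 0 := by simp [Dst]

lemma dst_eq_zero {p i j : ℕ} (hp : 4 ≤ p) (hi : i < p) (hj : j < p) (h : Dst p i j = 0) :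
    i = j := by
  by_cases h1 : i = p-1 <;> by_cases h2 : j = p-1
  · omega
  · subst h1; rw [Dst_nl p h2] at h; omega
  · subst h2; rw [Dst_nr p h1] at h; omega
  · rw [Dst_nn p h1 h2] at h; simp only [cycd, Nat.dist] at h; omega

lemma adj_cases {p i k : ℕ} (hp : 4 ≤ p) (hi : i < p) (hk : k < p)
    (h : Nat.dist i k = 1 ∨ Nat.dist i k = p - 2) :
    (i = p-1 ∧ (k = 1 ∨ k = p-2)) ∨ (k = p-1 ∧ (i = 1 ∨ i = p-2)) ∨
      (i < p-1 ∧ k < p-1 ∧ (k = i+1 ∨ i = k+1 ∨ (i = 0 ∧ k = p-2) ∨ (k = 0 ∧ i = p-2))) := by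
  rcases h with h | h <;> simp only [Nat.dist] at h <;> omega

lemma dst_lip (p : ℕ) (hp : 4 ≤ p) {i j k : ℕ} (hi : i < p) (hj : j < p) (hk : k < p)
    (h : Nat.dist i k = 1 ∨ Nat.dist i k = p - 2) : Dst p i j ≤ Dst p k j + 1 := by
  have hn : 3 ≤ p - 1 := by omega
  rcases adj_cases hp hi hk h with ⟨h1, h2⟩ | ⟨h1, h2⟩ | ⟨h1, h2, h3⟩
  · -- i = p-1, k ∈ {1, p-2}
    subst h1
    by_cases hj' : j = p-1
    · subst hj'; rw [Dst_nn']; exact Nat.zero_le _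
    · rw [Dst_nl p hj', Dst_nn p (by omega) hj']
      rcases h2 with h2 | h2 <;> subst h2
      · have := min_le_left (cycd (p-1) 1 j) (cycd (p-1) (p-2) j); omega
      · have := min_le_right (cycd (p-1) 1 j) (cycd (p-1) (p-2) j); omega
  · -- k = p-1, i ∈ {1, p-2}
    subst h1
    by_cases hj' : j = p-1
    · subst hj'; rw [Dst_nn', Dst_nr p (by omega)]
      rcases h2 with h2 | h2 <;> subst h2 <;> simp only [cycd, Nat.dist] <;> omega
    · rw [Dst_nl p hj', Dst_nn p (by omega) hj']
      have e1 : cycd (p-1) 1 j ≤ cycd (p-1) 0 j + 1 :=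
        cycd_adj_step hn (by omega) (by omega) (by omega) (by omega)
      have e2 : cycd (p-1) 0 j ≤ cycd (p-1) (p-2) j + 1 :=
        cycd_adj_step hn (by omega) (by omega) (by omega) (by omega)
      have e3 : cycd (p-1) (p-2) j ≤ cycd (p-1) 0 j + 1 :=
        cycd_adj_step hn (by omega) (by omega) (by omega) (by omega)
      have e4 : cycd (p-1) 0 j ≤ cycd (p-1) 1 j + 1 :=
        cycd_adj_step hn (by omega) (by omega) (by omega) (by omega)
      rcases h2 with h2 | h2 <;> subst h2 <;> omega
  · -- both on the cycle
    by_cases hj' : j = p-1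
    · subst hj'
      rw [Dst_nr p (by omega), Dst_nr p (by omega)]
      have e1 : cycd (p-1) i 1 ≤ cycd (p-1) k 1 + 1 :=
        cycd_adj_step hn (by omega) (by omega) (by omega) (by omega)
      have e2 : cycd (p-1) i (p-2) ≤ cycd (p-1) k (p-2) + 1 :=
        cycd_adj_step hn (by omega) (by omega) (by omega) (by omega)
      omega
    · rw [Dst_nn p (by omega) hj', Dst_nn p (by omega) hj']
      exact cycd_adj_step hn (by omega) (by omega) (by omega) (by omega)

lemma dst_step (p : ℕ) (hp : 4 ≤ p) {i j : ℕ} (hi : i < p) (hj : j < p) (hne : i ≠ j) :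
    ∃ k, k < p ∧ k ≠ i ∧ (Nat.dist i k = 1 ∨ Nat.dist i k = p - 2) ∧
      Dst p k j + 1 = Dst p i j := by
  by_cases hiN : i = p - 1
  · -- i = p-1, so j ≠ p-1
    subst hiN
    have hj2 : j ≠ p - 1 := by omega
    by_cases hc : cycd (p-1) 1 j ≤ cycd (p-1) (p-2) j
    · refine ⟨1, by omega, by omega, by simp only [Nat.dist]; omega, ?_⟩
      rw [Dst_nn p (by omega) (by omega), Dst_nl p (by omega)]
      omega
    · refine ⟨p-2, by omega, by omega, by simp only [Nat.dist]; omega, ?_⟩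
      rw [Dst_nn p (by omega) (by omega), Dst_nl p (by omega)]
      omega
  · by_cases hjN : j = p - 1
    · subst hjN
      by_cases h1 : i = 1 ∨ i = p - 2
      · refine ⟨p-1, by omega, by omega, by simp only [Nat.dist]; omega, ?_⟩
        rw [Dst_nn', Dst_nr p hiN]
        rcases h1 with h1 | h1 <;> subst h1 <;> simp only [cycd, Nat.dist] <;> omega
      · push_neg at h1
        by_cases h0 : i = 0
        · refine ⟨1, by omega, by omega, by simp only [Nat.dist]; omega, ?_⟩
          subst h0
          rw [Dst_nr p (by omega), Dst_nr p (by omega)]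
          simp only [cycd, Nat.dist]; omega
        · -- 2 ≤ i ≤ p-3
          have h3 : cycd (p-1) i 1 = min (i-1) (p-1-(i-1)) := by
            simp only [cycd, Nat.dist]; omega
          have h4 : cycd (p-1) i (p-2) = min (p-2-i) (p-1-(p-2-i)) := by
            simp only [cycd, Nat.dist]; omega
          by_cases hd : i - 1 ≤ p - 2 - i
          · refine ⟨i-1, by omega, by omega, by simp only [Nat.dist]; omega, ?_⟩
            rw [Dst_nr p (by omega), Dst_nr p (by omega)]
            have h1 : cycd (p-1) (i-1) 1 = min (i-2) (p-1-(i-2)) := by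
              simp only [cycd, Nat.dist]; omega
            have h2 : cycd (p-1) (i-1) (p-2) = min (p-1-i) (p-1-(p-1-i)) := by
              simp only [cycd, Nat.dist]; omega
            rw [h1, h2, h3, h4]; omega
          · refine ⟨i+1, by omega, by omega, by simp only [Nat.dist]; omega, ?_⟩
            rw [Dst_nr p (by omega), Dst_nr p (by omega)]
            have h1 : cycd (p-1) (i+1) 1 = min i (p-1-i) := by
              simp only [cycd, Nat.dist]; omega
            have h2 : cycd (p-1) (i+1) (p-2) = min (p-3-i) (p-1-(p-3-i)) := by
              simp only [cycd, Nat.dist]; omega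
            rw [h1, h2, h3, h4]; omega
    · -- i, j both on the cycle
      rcases Nat.lt_or_ge i j with hij | hij
      · by_cases hd : j - i ≤ (p-1) - (j - i)
        · refine ⟨i+1, by omega, by omega, by simp only [Nat.dist]; omega, ?_⟩
          rw [Dst_nn p (by omega) (by omega), Dst_nn p (by omega) (by omega)]
          simp only [cycd, Nat.dist]; omega
        · by_cases h0 : i = 0
          · refine ⟨p-2, by omega, by omega, by simp only [Nat.dist]; omega, ?_⟩
            subst h0
            rw [Dst_nn p (by omega) (by omega), Dst_nn p (by omega) (by omega)]
            simp only [cycd, Nat.dist]; omega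
          · refine ⟨i-1, by omega, by omega, by simp only [Nat.dist]; omega, ?_⟩
            rw [Dst_nn p (by omega) (by omega), Dst_nn p (by omega) (by omega)]
            simp only [cycd, Nat.dist]; omega
      · have hij' : j < i := by omega
        by_cases hd : i - j ≤ (p-1) - (i - j)
        · refine ⟨i-1, by omega, by omega, by simp only [Nat.dist]; omega, ?_⟩
          rw [Dst_nn p (by omega) (by omega), Dst_nn p (by omega) (by omega)]
          simp only [cycd, Nat.dist]; omega
        · by_cases h0 : i = p - 2
          · refine ⟨0, by omega, by omega, by simp only [Nat.dist]; omega, ?_⟩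
            subst h0
            rw [Dst_nn p (by omega) (by omega), Dst_nn p (by omega) (by omega)]
            simp only [cycd, Nat.dist]; omega
          · refine ⟨i+1, by omega, by omega, by simp only [Nat.dist]; omega, ?_⟩
            rw [Dst_nn p (by omega) (by omega), Dst_nn p (by omega) (by omega)]
            simp only [cycd, Nat.dist]; omega

lemma exists_walk (p : ℕ) (hp : 4 ≤ p) :
    ∀ d (i j : Fin p), Dst p i.val j.val = d →
      ∃ w : (toeplitzGraph p {1, p-2}).Walk i j, w.length = d := by
  intro d
  induction d using Nat.strong_induction_on with
  | _ d ih =>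
    intro i j hd
    by_cases hij : i = j
    · subst hij
      have h0 : d = 0 := by rw [← hd, dst_self]
      exact ⟨SimpleGraph.Walk.nil, by simp [h0]⟩
    · have hne : i.val ≠ j.val := fun h => hij (Fin.ext h)
      obtain ⟨k, hk, hki, hdist, heq⟩ := dst_step p hp i.isLt j.isLt hne
      have hd1 : 1 ≤ d := by
        rcases Nat.eq_zero_or_pos d with h0 | h1
        · exact absurd (dst_eq_zero hp i.isLt j.isLt (h0 ▸ hd)) hne
        · exact h1
      have hadj : (toeplitzGraph p {1, p-2}).Adj i ⟨k, hk⟩ := by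
        refine ⟨fun h => hki (congrArg Fin.val h).symm, ?_⟩
        show Nat.dist (i : ℕ) k ∈ ({1, p-2} : Set ℕ)
        simp only [Set.mem_insert_iff, Set.mem_singleton_iff]
        exact hdist
      obtain ⟨w, hw⟩ := ih (d-1) (by omega) ⟨k, hk⟩ j (by simp only; omega)
      exact ⟨SimpleGraph.Walk.cons hadj w, by
        rw [SimpleGraph.Walk.length_cons, hw]; omega⟩

lemma walk_ge (p : ℕ) (hp : 4 ≤ p) :
    ∀ {i j : Fin p} (w : (toeplitzGraph p {1, p-2}).Walk i j),
      Dst p i.val j.val ≤ w.length := by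
  intro i j w
  induction w with
  | nil => rw [dst_self]; exact Nat.zero_le _
  | @cons a b c hadj tail ih =>
    rw [SimpleGraph.Walk.length_cons]
    have hd : Nat.dist (a : ℕ) (b : ℕ) = 1 ∨ Nat.dist (a : ℕ) (b : ℕ) = p - 2 := by
      have := hadj.2
      simp only [Set.mem_insert_iff, Set.mem_singleton_iff] at this
      exact this
    have := dst_lip p hp (i := a.val) (j := c.val) (k := b.val) a.isLt c.isLt b.isLt hd
    omega

lemma dist_eq (p : ℕ) (hp : 4 ≤ p) (i j : Fin p) :
    (toeplitzGraph p {1, p-2}).dist i j = Dst p i.val j.val := by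
  obtain ⟨w, hw⟩ := exists_walk p hp _ i j rfl
  apply le_antisymm
  · exact hw ▸ SimpleGraph.dist_le w
  · have hr : (toeplitzGraph p {1, p-2}).Reachable i j := ⟨w⟩
    obtain ⟨w', hw'⟩ := hr.exists_walk_length_eq_dist
    calc Dst p i.val j.val ≤ w'.length := walk_ge p hp w'
    _ = _ := hw'

lemma eq_small_aux (p m : ℕ) (hp : 4 ≤ p) (hm : p = 2*m+2) (a b : ℕ)
    (hcase : (a < p-2 ∧ b = a+1) ∨ (a = 0 ∧ b = p-2) ∨ (a = p-2 ∧ b = p-1) ∨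
      (a = 1 ∧ b = p-1)) :
    ∃ x, x < p-1 ∧ ∀ w, w < p → Dst p w a = Dst p w b → w = x ∨ w = p-1 := by
  rcases hcase with ⟨h1, h2⟩ | ⟨h1, h2⟩ | ⟨h1, h2⟩ | ⟨h1, h2⟩
  · -- edge (a, a+1), both < p-1
    subst h2
    by_cases hx : a + m + 2 < p
    · refine ⟨a+m+1, by omega, fun w hw h => ?_⟩
      by_cases hwN : w = p-1
      · exact Or.inr hwN
      · left
        rw [Dst_nn p hwN (by omega), Dst_nn p hwN (by omega)] at h
        simp only [cycd, Nat.dist] at h; omega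
    · refine ⟨a+m+2-p, by omega, fun w hw h => ?_⟩
      by_cases hwN : w = p-1
      · exact Or.inr hwN
      · left
        rw [Dst_nn p hwN (by omega), Dst_nn p hwN (by omega)] at h
        simp only [cycd, Nat.dist] at h; omega
  · -- edge (0, p-2)
    subst h1; subst h2
    refine ⟨m, by omega, fun w hw h => ?_⟩
    by_cases hwN : w = p-1
    · exact Or.inr hwN
    · left
      rw [Dst_nn p hwN (by omega), Dst_nn p hwN (by omega)] at h
      simp only [cycd, Nat.dist] at h; omega
  · -- edge (p-2, p-1)
    subst h1; subst h2
    refine ⟨m, by omega, fun w hw h => ?_⟩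
    by_cases hwN : w = p-1
    · exact Or.inr hwN
    · left
      rw [Dst_nn p hwN (by omega), Dst_nr p hwN] at h
      simp only [cycd, Nat.dist] at h; omega
  · -- edge (1, p-1)
    subst h1; subst h2
    refine ⟨m+1, by omega, fun w hw h => ?_⟩
    by_cases hwN : w = p-1
    · exact Or.inr hwN
    · left
      rw [Dst_nn p hwN (by omega), Dst_nr p hwN] at h
      simp only [cycd, Nat.dist] at h; omega

lemma eq_small (p m : ℕ) (hp : 4 ≤ p) (hm : p = 2*m+2) (u v : Fin p)
    (hne : u.val ≠ v.val)
    (h : Nat.dist u.val v.val = 1 ∨ Nat.dist u.val v.val = p - 2) :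
    ∃ x : Fin p, ∀ w : Fin p,
      Dst p w.val u.val = Dst p w.val v.val → w = x ∨ w.val = p - 1 := by
  have key : ∃ a b : ℕ, ((a < p-2 ∧ b = a+1) ∨ (a = 0 ∧ b = p-2) ∨ (a = p-2 ∧ b = p-1) ∨
      (a = 1 ∧ b = p-1)) ∧ ((a = u.val ∧ b = v.val) ∨ (a = v.val ∧ b = u.val)) := by
    rcases adj_cases hp u.isLt v.isLt h with ⟨h1, h2⟩ | ⟨h1, h2⟩ | ⟨h1, h2, h3⟩
    · rcases h2 with h2 | h2
      · exact ⟨1, p-1, by omega, by omega⟩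
      · exact ⟨p-2, p-1, by omega, by omega⟩
    · rcases h2 with h2 | h2
      · exact ⟨1, p-1, by omega, by omega⟩
      · exact ⟨p-2, p-1, by omega, by omega⟩
    · rcases h3 with h3 | h3 | h3 | h3
      · exact ⟨u.val, v.val, by omega, by omega⟩
      · exact ⟨v.val, u.val, by omega, by omega⟩
      · exact ⟨0, p-2, by omega, by omega⟩
      · exact ⟨0, p-2, by omega, by omega⟩
  obtain ⟨a, b, hab, hor⟩ := key
  obtain ⟨x, hx, hxall⟩ := eq_small_aux p m hp hm a b hab
  refine ⟨⟨x, by omega⟩, fun w hw => ?_⟩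
  have hw' : Dst p w.val a = Dst p w.val b := by
    rcases hor with ⟨e1, e2⟩ | ⟨e1, e2⟩ <;> rw [e1, e2]
    · exact hw
    · exact hw.symm
  rcases hxall w.val w.isLt hw' with h' | h'
  · exact Or.inl (Fin.ext h')
  · exact Or.inr h'

lemma cover (p m : ℕ) (hp : 4 ≤ p) (hm : p = 2*m+2) (w : Fin p) :
    ∃ k, k < p-1 ∧ Dst p w.val k = Dst p w.val (if k = p-2 then 0 else k+1) := by
  by_cases hwN : w.val = p-1
  · refine ⟨m, by omega, ?_⟩
    rw [if_neg (by omega), hwN, Dst_nl p (by omega), Dst_nl p (by omega)]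
    simp only [cycd, Nat.dist]; omega
  · by_cases hlt : w.val + m < p - 1
    · refine ⟨w.val + m, by omega, ?_⟩
      by_cases hk2 : w.val + m = p-2
      · rw [if_pos hk2, Dst_nn p hwN (by omega), Dst_nn p hwN (by omega)]
        simp only [cycd, Nat.dist]; omega
      · rw [if_neg hk2, Dst_nn p hwN (by omega), Dst_nn p hwN (by omega)]
        simp only [cycd, Nat.dist]; omega
    · refine ⟨w.val + m - (p-1), by omega, ?_⟩
      rw [if_neg (by omega), Dst_nn p hwN (by omega), Dst_nn p hwN (by omega)]
      simp only [cycd, Nat.dist]; omega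

/-- For every even integer `℘ ≥ 4`,
`℘/(℘-1) ≤ ldimf(T_℘⟨{1, ℘-2}⟩) ≤ ℘/(℘-2)`. -/
theorem ldimf_toeplitz_one_sub_two_even (p : ℕ) (hp : 4 ≤ p) (heven : Even p) :
    (p : ℝ) / ((p : ℝ) - 1) ≤ ldimf (toeplitzGraph p {1, p - 2}) ∧
      ldimf (toeplitzGraph p {1, p - 2}) ≤ (p : ℝ) / ((p : ℝ) - 2) := by
  obtain ⟨c, hc⟩ := heven
  have hm : p = 2 * (c - 1) + 2 := by omega
  set m := c - 1 with hmdef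
  set G := toeplitzGraph p {1, p - 2} with hG
  have hp4 : (4 : ℝ) ≤ (p : ℝ) := by exact_mod_cast hp
  -- cardinality bound for every resolving neighborhood
  have hcard : ∀ u v : Fin p, G.Adj u v →
      p - 2 ≤ (Finset.univ.filter (fun w => G.dist w u ≠ G.dist w v)).card := by
    intro u v huv
    obtain ⟨hne, hmem⟩ := huv
    have hne' : u.val ≠ v.val := fun h => hne (Fin.ext h)
    have hmem' : Nat.dist u.val v.val = 1 ∨ Nat.dist u.val v.val = p - 2 := by
      simpa only [Set.mem_insert_iff, Set.mem_singleton_iff] using hmem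
    obtain ⟨x, hx⟩ := eq_small p m hp hm u v hne' hmem'
    have hsub : Finset.univ.filter (fun w : Fin p => ¬ (G.dist w u ≠ G.dist w v)) ⊆
        ({x, ⟨p-1, by omega⟩} : Finset (Fin p)) := by
      intro w hw
      simp only [Finset.mem_filter, Finset.mem_univ, true_and, not_not] at hw
      rw [dist_eq p hp, dist_eq p hp] at hw
      simp only [Finset.mem_insert, Finset.mem_singleton]
      rcases hx w hw with h | h
      · exact Or.inl h
      · exact Or.inr (Fin.ext h)
    have h2 : (Finset.univ.filter (fun w : Fin p => ¬ (G.dist w u ≠ G.dist w v))).card ≤ 2 := by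
      refine le_trans (Finset.card_le_card hsub) (le_trans (Finset.card_insert_le _ _) ?_)
      simp
    have h3 := Finset.card_filter_add_card_filter_not
      (s := (Finset.univ : Finset (Fin p))) (p := fun w : Fin p => G.dist w u ≠ G.dist w v)
    have h4 : (Finset.univ : Finset (Fin p)).card = p := by simp
    omega
  -- the constant function is a local resolving function
  have hmem_upper : ((p : ℝ) / ((p : ℝ) - 2)) ∈
      {s : ℝ | ∃ ζ : Fin p → ℝ, IsLocalResolvingFunction G ζ ∧ s = ∑ v, ζ v} := by
    refine ⟨fun _ => 1 / ((p : ℝ) - 2), ⟨fun w => ?_, ?_⟩, ?_⟩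
    · constructor
      · apply div_nonneg zero_le_one; linarith
      · rw [div_le_one (by linarith)]; linarith
    · intro u v huv
      rw [Finset.sum_const, nsmul_eq_mul]
      have hcard' := hcard u v huv
      have hcast : ((p : ℝ) - 2) ≤
          ((Finset.univ.filter (fun w => G.dist w u ≠ G.dist w v)).card : ℝ) := by
        have h5 : ((p - 2 : ℕ) : ℝ) ≤
            ((Finset.univ.filter (fun w => G.dist w u ≠ G.dist w v)).card : ℝ) :=
          Nat.cast_le.mpr hcard'
        rw [Nat.cast_sub (by omega)] at h5
        simpa using h5
      calc (1 : ℝ) = ((p : ℝ) - 2) * (1 / ((p : ℝ) - 2)) := by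
            rw [mul_one_div, div_self (by linarith : (p : ℝ) - 2 ≠ 0)]
      _ ≤ _ := by
        apply mul_le_mul_of_nonneg_right hcast
        apply div_nonneg zero_le_one; linarith
    · rw [Finset.sum_const, Finset.card_univ, Fintype.card_fin, nsmul_eq_mul,
        div_eq_mul_one_div]
  have hbdd : BddBelow {s : ℝ | ∃ ζ : Fin p → ℝ, IsLocalResolvingFunction G ζ ∧ s = ∑ v, ζ v} := by
    refine ⟨0, fun s hs => ?_⟩
    obtain ⟨ζ, ⟨hzq, _⟩, rfl⟩ := hs
    exact Finset.sum_nonneg fun w _ => (hzq w).1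
  constructor
  · -- lower bound
    apply le_csInf ⟨_, hmem_upper⟩
    rintro s ⟨ζ, ⟨hzIcc, hzres⟩, rfl⟩
    -- edges indexed by Fin (p-1)
    have hppos : 0 < p := by omega
    set uk : Fin (p-1) → Fin p := fun k => ⟨k.val, by omega⟩ with huk
    set vk : Fin (p-1) → Fin p :=
      fun k => ⟨if k.val = p-2 then 0 else k.val+1, by split <;> omega⟩ with hvk
    have hadjk : ∀ k : Fin (p-1), G.Adj (uk k) (vk k) := by
      intro k
      refine ⟨?_, ?_⟩
      · intro hcon
        have := congrArg Fin.val hcon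
        simp only [huk, hvk] at this
        split at this <;> omega
      · show Nat.dist (uk k).val (vk k).val ∈ ({1, p-2} : Set ℕ)
        simp only [Set.mem_insert_iff, Set.mem_singleton_iff, huk, hvk, Nat.dist]
        split <;> omega
    have key : (p : ℝ) - 1 ≤ ((p : ℝ) - 2) * ∑ v, ζ v := by
      have step1 : (p : ℝ) - 1 ≤ ∑ k : Fin (p-1),
          ∑ w ∈ Finset.univ.filter (fun w => G.dist w (uk k) ≠ G.dist w (vk k)), ζ w := by
        have : ∀ k : Fin (p-1), (1 : ℝ) ≤
            ∑ w ∈ Finset.univ.filter (fun w => G.dist w (uk k) ≠ G.dist w (vk k)), ζ w :=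
          fun k => hzres (uk k) (vk k) (hadjk k)
        calc (p : ℝ) - 1 = ∑ _k : Fin (p-1), (1 : ℝ) := by
              rw [Finset.sum_const, Finset.card_univ, Fintype.card_fin, nsmul_eq_mul,
                mul_one, Nat.cast_sub (by omega), Nat.cast_one]
        _ ≤ _ := Finset.sum_le_sum fun k _ => this k
      have step2 : ∑ k : Fin (p-1),
          ∑ w ∈ Finset.univ.filter (fun w => G.dist w (uk k) ≠ G.dist w (vk k)), ζ w
          ≤ ((p : ℝ) - 2) * ∑ v, ζ v := by
        have e1 : ∀ k : Fin (p-1),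
            ∑ w ∈ Finset.univ.filter (fun w => G.dist w (uk k) ≠ G.dist w (vk k)), ζ w
            = ∑ w : Fin p, if G.dist w (uk k) ≠ G.dist w (vk k) then ζ w else 0 :=
          fun k => Finset.sum_filter _ _
        rw [Finset.sum_congr rfl fun k _ => e1 k, Finset.sum_comm]
        have e2 : ∀ w : Fin p,
            (∑ k : Fin (p-1), if G.dist w (uk k) ≠ G.dist w (vk k) then ζ w else 0)
            ≤ ((p : ℝ) - 2) * ζ w := by
          intro w
          obtain ⟨k0, hk0lt, hk0eq⟩ := cover p m hp hm w
          set k0' : Fin (p-1) := ⟨k0, hk0lt⟩ with hk0'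
          have hzero : (if G.dist w (uk k0') ≠ G.dist w (vk k0') then ζ w else 0) = 0 := by
            rw [if_neg]
            intro hcon
            apply hcon
            rw [dist_eq p hp, dist_eq p hp]
            exact hk0eq
          have hsplit : (∑ k ∈ Finset.univ.erase k0',
                if G.dist w (uk k) ≠ G.dist w (vk k) then ζ w else 0) +
              (if G.dist w (uk k0') ≠ G.dist w (vk k0') then ζ w else 0) =
              ∑ k : Fin (p-1), if G.dist w (uk k) ≠ G.dist w (vk k) then ζ w else 0 :=
            Finset.sum_erase_add (Finset.univ : Finset (Fin (p-1)))
              (fun k => if G.dist w (uk k) ≠ G.dist w (vk k) then ζ w else 0)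
              (Finset.mem_univ k0')
          have hrest : ∑ k ∈ Finset.univ.erase k0',
              (if G.dist w (uk k) ≠ G.dist w (vk k) then ζ w else 0) ≤ ((p:ℝ) - 2) * ζ w := by
            have hle : ∀ k ∈ Finset.univ.erase k0',
                (if G.dist w (uk k) ≠ G.dist w (vk k) then ζ w else 0) ≤ ζ w := by
              intro k _
              split
              · exact le_refl _
              · exact (hzIcc w).1
            calc ∑ k ∈ Finset.univ.erase k0',
                  (if G.dist w (uk k) ≠ G.dist w (vk k) then ζ w else 0)
                ≤ (Finset.univ.erase k0').card • ζ w := Finset.sum_le_card_nsmul _ _ _ hle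
            _ = ((p : ℝ) - 2) * ζ w := by
                rw [Finset.card_erase_of_mem (Finset.mem_univ _), Finset.card_univ,
                  Fintype.card_fin, nsmul_eq_mul, Nat.cast_sub (by omega), Nat.cast_sub (by omega)]
                push_cast
                ring
          rw [← hsplit, hzero, add_zero]
          exact hrest
        calc ∑ w : Fin p, ∑ k : Fin (p-1),
              (if G.dist w (uk k) ≠ G.dist w (vk k) then ζ w else 0)
            ≤ ∑ w : Fin p, ((p : ℝ) - 2) * ζ w := Finset.sum_le_sum fun w _ => e2 w
        _ = ((p : ℝ) - 2) * ∑ v, ζ v := by rw [← Finset.mul_sum]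
      linarith
    have hs1 : ((p : ℝ) - 1) / ((p : ℝ) - 2) ≤ ∑ v, ζ v := by
      rw [div_le_iff₀ (by linarith)]
      linarith [key]
    have hs2 : (p : ℝ) / ((p : ℝ) - 1) ≤ ((p : ℝ) - 1) / ((p : ℝ) - 2) := by
      rw [div_le_div_iff₀ (by linarith) (by linarith)]
      nlinarith
    linarith
  · exact csInf_le hbdd hmem_upper
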